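/- arXiv:2012.14043 — 7 statements merged into one kernel-verified Lean document; each statement's English description precedes it below -/
import Mathlib

section
/- Let D ⊆ ℝ^m be a closed convex set, and suppose a sequence of vectors u₁, u₂, ... ∈ ℝ^m is uniformly bounded by M (‖u_k‖ ≤ M) and satisfies the Blackwell condition: for every k with ū_k ∉ D, ⟨u_{k+1} - P_D(ū_k), ū_k - P_D(ū_k)⟩ ≤ 0, where ū_k = (1/k)∑_{i=1}^k u_i. Then d(ū_k, D)² ≤ 4M²/k for all k ≥ 1, and in particular d(ū_k, D) → 0. -/
open Finset Filter

set_option maxHeartbeats 1000000 in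
/-- Quantitative core of Blackwell's approachability theorem: if the payoffs are bounded
by `M` and satisfy the Blackwell condition with respect to the closed convex target `D`,
then the squared distance of the running average to `D` decays like `4M²/k`. -/
theorem stmt_3 {m : ℕ} (D : Set (EuclideanSpace ℝ (Fin m)))
    (hDclosed : IsClosed D) (hDconvex : Convex ℝ D)
    (proj : EuclideanSpace ℝ (Fin m) → EuclideanSpace ℝ (Fin m))
    (hprojD : ∀ z, proj z ∈ D)
    (hproj : ∀ z, ∀ w ∈ D, dist z (proj z) ≤ dist z w)
    (u : ℕ → EuclideanSpace ℝ (Fin m)) (M : ℝ)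
    (hM : ∀ k, ‖u k‖ ≤ M)
    (ubar : ℕ → EuclideanSpace ℝ (Fin m))
    (hubar : ∀ k, ubar k = (k : ℝ)⁻¹ • ∑ i ∈ Finset.range k, u (i + 1))
    (hBlackwell : ∀ k ≥ 1, ubar k ∉ D →
      (inner ℝ (u (k + 1) - proj (ubar k)) (ubar k - proj (ubar k)) : ℝ) ≤ 0) :
    (∀ k ≥ 1, (Metric.infDist (ubar k) D) ^ 2 ≤ 4 * M ^ 2 / k) ∧
    Tendsto (fun k => Metric.infDist (ubar k) D) atTop (nhds 0) := by
  have hM0 : 0 ≤ M := le_trans (norm_nonneg _) (hM 0)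
  -- infDist equals distance to the projection
  have hd : ∀ z, Metric.infDist z D = dist z (proj z) := by
    intro z
    refine le_antisymm (Metric.infDist_le_dist_of_mem (hprojD z)) ?_
    by_contra h
    push_neg at h
    obtain ⟨y, hy, hylt⟩ := (Metric.infDist_lt_iff ⟨proj z, hprojD z⟩).1 h
    exact absurd (hproj z y hy) (not_le.2 hylt)
  have hproj_self : ∀ z ∈ D, proj z = z := by
    intro z hz
    have h1 := hproj z z hz
    rw [dist_self] at h1
    have h2 : dist z (proj z) = 0 := le_antisymm h1 dist_nonneg
    exact (dist_eq_zero.1 h2).symm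
  -- k • ubar k = sum
  have hsum : ∀ k : ℕ, (k : ℝ) • ubar k = ∑ i ∈ Finset.range k, u (i + 1) := by
    intro k
    rcases Nat.eq_zero_or_pos k with rfl | hk
    · simp
    · rw [hubar, smul_smul, mul_inv_cancel₀ (by positivity), one_smul]
  have hrec : ∀ k : ℕ, ((k : ℝ) + 1) • ubar (k + 1) = (k : ℝ) • ubar k + u (k + 1) := by
    intro k
    have h1 := hsum (k + 1)
    rw [Finset.sum_range_succ, ← hsum k] at h1
    push_cast at h1
    exact h1
  -- bound on norm of averages
  have hub : ∀ k : ℕ, 1 ≤ k → ‖ubar k‖ ≤ M := by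
    intro k hk
    rw [hubar, norm_smul]
    have hs : ‖∑ i ∈ Finset.range k, u (i + 1)‖ ≤ (k : ℝ) * M := by
      calc ‖∑ i ∈ Finset.range k, u (i + 1)‖ ≤ ∑ i ∈ Finset.range k, ‖u (i + 1)‖ :=
            norm_sum_le _ _
        _ ≤ ∑ _i ∈ Finset.range k, M := Finset.sum_le_sum fun i _ => hM _
        _ = (k : ℝ) * M := by simp [mul_comm]
    have hk' : (0 : ℝ) < k := by exact_mod_cast hk
    calc ‖(k : ℝ)⁻¹‖ * ‖∑ i ∈ Finset.range k, u (i + 1)‖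
        ≤ (k : ℝ)⁻¹ * ((k : ℝ) * M) := by
          apply mul_le_mul _ hs (norm_nonneg _) (by positivity)
          rw [Real.norm_eq_abs, abs_of_pos (by positivity)]
      _ = M := by field_simp
  -- the cross term is nonpositive
  have hcross : ∀ k : ℕ, 1 ≤ k →
      (inner ℝ (u (k + 1) - proj (ubar k)) (ubar k - proj (ubar k)) : ℝ) ≤ 0 := by
    intro k hk
    by_cases hmem : ubar k ∈ D
    · rw [hproj_self _ hmem]
      simp
    · exact hBlackwell k hk hmem
  have hd0 : ∀ k, 0 ≤ Metric.infDist (ubar k) D := fun k => Metric.infDist_nonneg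
  -- the payoff stays within 2M of the running average
  have hE : ∀ k : ℕ, 1 ≤ k → ‖u (k + 1) - ubar k‖ ≤ 2 * M := by
    intro k hk
    calc ‖u (k + 1) - ubar k‖ ≤ ‖u (k + 1)‖ + ‖ubar k‖ := norm_sub_le _ _
      _ ≤ M + M := add_le_add (hM _) (hub k hk)
      _ = 2 * M := by ring
  -- main quantitative bound
  have main : ∀ k : ℕ, 1 ≤ k → (Metric.infDist (ubar k) D) ^ 2 * (k : ℝ) ≤ 4 * M ^ 2 := by
    intro k hk
    induction k, hk using Nat.le_induction with
    | base =>
      set p := proj (ubar 1) with hp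
      set A := Metric.infDist (ubar 1) D with hAdef
      have hA : A = ‖ubar 1 - p‖ := by rw [hAdef, hd, dist_eq_norm]
      have hA0 : 0 ≤ A := hd0 1
      have hc : (inner ℝ (u (1 + 1) - p) (ubar 1 - p) : ℝ) ≤ 0 := hcross 1 le_rfl
      have hid : A ^ 2 = (inner ℝ (ubar 1 - u (1 + 1)) (ubar 1 - p) : ℝ)
          + (inner ℝ (u (1 + 1) - p) (ubar 1 - p) : ℝ) := by
        rw [hA, ← real_inner_self_eq_norm_sq, ← inner_add_left]
        congr 1
        abel
      have hE1 : (inner ℝ (ubar 1 - u (1 + 1)) (ubar 1 - p) : ℝ) ≤ 2 * M * A := by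
        calc (inner ℝ (ubar 1 - u (1 + 1)) (ubar 1 - p) : ℝ)
            ≤ ‖ubar 1 - u (1 + 1)‖ * ‖ubar 1 - p‖ := real_inner_le_norm _ _
          _ ≤ 2 * M * A := by
              rw [← hA]
              apply mul_le_mul _ le_rfl hA0 (by positivity)
              calc ‖ubar 1 - u (1 + 1)‖ ≤ ‖ubar 1‖ + ‖u (1 + 1)‖ := norm_sub_le _ _
                _ ≤ M + M := add_le_add (hub 1 le_rfl) (hM _)
                _ = 2 * M := by ring
      have h1 : A ^ 2 ≤ 2 * M * A := by linarith
      have h2 := sq_nonneg (A - 2 * M)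
      push_cast
      nlinarith
    | succ k hk ih =>
      set p := proj (ubar k) with hp
      set a := ubar k - p with ha
      set b := u (k + 1) - p with hb
      have hC : (inner ℝ b a : ℝ) ≤ 0 := hcross k hk
      have hA : Metric.infDist (ubar k) D = ‖a‖ := by rw [hd, dist_eq_norm]
      have hk' : (1 : ℝ) ≤ (k : ℝ) := by exact_mod_cast hk
      -- (k+1)(ubar (k+1) - p) = k • a + b
      have hkey : ((k : ℝ) + 1) • (ubar (k + 1) - p) = (k : ℝ) • a + b := by
        rw [smul_sub, hrec k, ha, hb, smul_sub, add_smul, one_smul]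
        abel
      have hdist : Metric.infDist (ubar (k + 1)) D ≤ ‖ubar (k + 1) - p‖ := by
        calc Metric.infDist (ubar (k + 1)) D ≤ dist (ubar (k + 1)) p :=
              Metric.infDist_le_dist_of_mem (hprojD _)
          _ = ‖ubar (k + 1) - p‖ := dist_eq_norm _ _
      have hnorm : ((k : ℝ) + 1) * Metric.infDist (ubar (k + 1)) D ≤ ‖(k : ℝ) • a + b‖ := by
        rw [← hkey, norm_smul, Real.norm_eq_abs,
          abs_of_pos (show (0 : ℝ) < (k : ℝ) + 1 by positivity)]
        exact mul_le_mul_of_nonneg_left hdist (by positivity)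
      -- expand the squared norm
      have hexp : ‖(k : ℝ) • a + b‖ ^ 2
          = (k : ℝ) ^ 2 * ‖a‖ ^ 2 + 2 * (k : ℝ) * (inner ℝ b a : ℝ) + ‖b‖ ^ 2 := by
        rw [norm_add_sq_real, norm_smul, real_inner_smul_left, Real.norm_eq_abs, mul_pow,
          sq_abs, real_inner_comm a b]
        ring
      have hba : u (k + 1) - ubar k = b - a := by rw [ha, hb]; abel
      have hbeq : b = (b - a) + a := by abel
      have hbsq : ‖b‖ ^ 2 = ‖u (k + 1) - ubar k‖ ^ 2 + 2 * (inner ℝ b a : ℝ) - ‖a‖ ^ 2 := by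
        rw [hba]
        conv_lhs => rw [hbeq]
        rw [norm_add_sq_real, inner_sub_left, real_inner_self_eq_norm_sq]
        ring
      have hE2 : ‖u (k + 1) - ubar k‖ ^ 2 ≤ 4 * M ^ 2 := by
        nlinarith [hE k hk, norm_nonneg (u (k + 1) - ubar k)]
      have hsq : (((k : ℝ) + 1) * Metric.infDist (ubar (k + 1)) D) ^ 2
          ≤ ‖(k : ℝ) • a + b‖ ^ 2 := by
        apply sq_le_sq' _ hnorm
        have h0 : 0 ≤ ((k : ℝ) + 1) * Metric.infDist (ubar (k + 1)) D := by
          have := hd0 (k + 1)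
          positivity
        linarith [norm_nonneg ((k : ℝ) • a + b)]
      have hgoal : (((k : ℝ) + 1) * Metric.infDist (ubar (k + 1)) D) ^ 2
          ≤ (Metric.infDist (ubar k) D) ^ 2 * (k : ℝ) ^ 2 + 4 * M ^ 2 := by
        rw [hA]
        nlinarith [hsq, hexp, hbsq, hE2, hC, sq_nonneg ‖a‖]
      have hik : (Metric.infDist (ubar k) D) ^ 2 * (k : ℝ) ^ 2 ≤ 4 * M ^ 2 * (k : ℝ) := by
        nlinarith [ih, sq_nonneg (Metric.infDist (ubar k) D)]
      have hfin : (((k : ℝ) + 1) * Metric.infDist (ubar (k + 1)) D) ^ 2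
          ≤ 4 * M ^ 2 * ((k : ℝ) + 1) := by linarith
      push_cast
      nlinarith [hfin, hd0 (k + 1), sq_nonneg (Metric.infDist (ubar (k + 1)) D), hk']
  have key : ∀ k : ℕ, 1 ≤ k → (Metric.infDist (ubar k) D) ^ 2 ≤ 4 * M ^ 2 / (k : ℝ) := by
    intro k hk
    have hk' : (0 : ℝ) < k := by exact_mod_cast hk
    rw [le_div_iff₀ hk']
    exact main k hk
  refine ⟨fun k hk => key k hk, ?_⟩
  -- convergence to zero by squeezing
  have hlim : Tendsto (fun k : ℕ => Real.sqrt (4 * M ^ 2 / (k : ℝ))) atTop (nhds 0) := by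
    have h1 : Tendsto (fun k : ℕ => 4 * M ^ 2 / (k : ℝ)) atTop (nhds 0) :=
      tendsto_const_div_atTop_nhds_zero_nat (4 * M ^ 2)
    have h2 := (Real.continuous_sqrt.tendsto 0).comp h1
    rw [Real.sqrt_zero] at h2
    exact h2
  apply squeeze_zero' (Eventually.of_forall fun k => hd0 k) _ hlim
  filter_upwards [eventually_ge_atTop 1] with k hk
  calc Metric.infDist (ubar k) D = Real.sqrt ((Metric.infDist (ubar k) D) ^ 2) := by
        rw [Real.sqrt_sq (hd0 k)]
    _ ≤ Real.sqrt (4 * M ^ 2 / (k : ℝ)) := Real.sqrt_le_sqrt (key k hk)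
end

section
/- Let D ⊆ ℝ^m be a closed convex set approachable by Player 1 in the Blackwell game ⟨X, Y, u, D⟩ (with X, Y compact convex and u bi-affine). Then every closed halfspace H containing D is approachable, i.e., there exists x* ∈ X such that u(x*, y) ∈ H for all y ∈ Y. -/
open Finset Filter

/-- Play sequence: Player 1 follows strategy `σ`, Player 2 responds with `r`. -/
noncomputable def blackwellSeq {α β : Type*} (σ : (k : ℕ) → (Fin k → α × β) → α)
    (r : α → β) : ℕ → α × β
  | k =>
    let x := σ k (fun i => blackwellSeq σ r i)
    (x, r x)
decreasing_by exact i.isLt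

theorem blackwellSeq_def {α β : Type*} (σ : (k : ℕ) → (Fin k → α × β) → α)
    (r : α → β) (k : ℕ) :
    blackwellSeq σ r k =
      (σ k (fun i => blackwellSeq σ r i), r (σ k (fun i => blackwellSeq σ r i))) := by
  rw [blackwellSeq]

/-- An `ℝ`-affine map from a finite-dimensional space is continuous. -/
theorem affine_continuous {n d : ℕ}
    (f : EuclideanSpace ℝ (Fin n) → EuclideanSpace ℝ (Fin d))
    (hf : ∀ (t : ℝ) x₁ x₂, f (t • x₁ + (1 - t) • x₂) = t • f x₁ + (1 - t) • f x₂) :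
    Continuous f := by
  have hsmul : ∀ (t : ℝ) x, f (t • x) - f 0 = t • (f x - f 0) := by
    intro t x
    have := hf t x 0
    simp only [smul_zero, add_zero] at this
    rw [this]
    module
  have hadd : ∀ x z, f (x + z) - f 0 = (f x - f 0) + (f z - f 0) := by
    intro x z
    have h2 : f (x + z) - f 0 = (2:ℝ) • (f ((2:ℝ)⁻¹ • (x+z)) - f 0) := by
      have := hsmul 2 ((2:ℝ)⁻¹ • (x+z))
      rw [smul_smul] at this
      norm_num at this
      rw [this]; norm_num
    have := hf (2:ℝ)⁻¹ x z
    norm_num at this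
    rw [show (1/2 : ℝ) = 2⁻¹ from by norm_num] at this
    rw [h2, smul_add, this]
    module
  let g : EuclideanSpace ℝ (Fin n) →ₗ[ℝ] EuclideanSpace ℝ (Fin d) :=
    { toFun := fun x => f x - f 0
      map_add' := hadd
      map_smul' := fun t x => hsmul t x }
  have : Continuous g := g.continuous_of_finiteDimensional
  have hfg : f = fun x => g x + f 0 := by
    funext x; simp [g]
  rw [hfg]
  exact this.add continuous_const


/-- Necessity direction of Blackwell's theorem: if the closed convex target `D` is
approachable in the Blackwell game `⟨X, Y, u, D⟩`, then every closed halfspace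
containing `D` is approachable (in one step). -/
theorem stmt_4 {n m d : ℕ}
    (X : Set (EuclideanSpace ℝ (Fin n))) (Y : Set (EuclideanSpace ℝ (Fin m)))
    (hXcomp : IsCompact X) (hXconv : Convex ℝ X) (hXne : X.Nonempty)
    (hYcomp : IsCompact Y) (hYconv : Convex ℝ Y) (hYne : Y.Nonempty)
    (u : EuclideanSpace ℝ (Fin n) → EuclideanSpace ℝ (Fin m) → EuclideanSpace ℝ (Fin d))
    (hu_affine_x : ∀ y, ∀ t : ℝ, ∀ x₁ x₂,
      u (t • x₁ + (1 - t) • x₂) y = t • u x₁ y + (1 - t) • u x₂ y)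
    (hu_affine_y : ∀ x, ∀ t : ℝ, ∀ y₁ y₂,
      u x (t • y₁ + (1 - t) • y₂) = t • u x y₁ + (1 - t) • u x y₂)
    (D : Set (EuclideanSpace ℝ (Fin d)))
    (hDclosed : IsClosed D) (hDconv : Convex ℝ D) (hDne : D.Nonempty)
    -- `D` is approachable: there is a strategy `σ` mapping histories of play to actions
    -- in `X` such that, whatever Player 2 plays in `Y`, the average payoff converges to `D`.
    (happr : ∃ σ : (k : ℕ) →
        (Fin k → EuclideanSpace ℝ (Fin n) × EuclideanSpace ℝ (Fin m)) →
        EuclideanSpace ℝ (Fin n),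
      (∀ k h, σ k h ∈ X) ∧
      ∀ (x : ℕ → EuclideanSpace ℝ (Fin n)) (y : ℕ → EuclideanSpace ℝ (Fin m)),
        (∀ k, y k ∈ Y) →
        (∀ k, x k = σ k (fun i => (x i, y i))) →
        Tendsto (fun K : ℕ =>
            Metric.infDist ((K : ℝ)⁻¹ • ∑ i ∈ Finset.range K, u (x i) (y i)) D)
          atTop (nhds 0))
    -- a closed halfspace containing `D`
    (a : EuclideanSpace ℝ (Fin d)) (b : ℝ)
    (hDH : D ⊆ {z | (inner ℝ a z : ℝ) ≤ b}) :
    ∃ xstar ∈ X, ∀ y ∈ Y, (inner ℝ a (u xstar y) : ℝ) ≤ b := by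
  classical
  obtain ⟨x0, hx0⟩ := hXne
  obtain ⟨y0, hy0⟩ := hYne
  obtain ⟨z0, hz0⟩ := hDne
  by_cases ha : a = 0
  · refine ⟨x0, hx0, fun y hy => ?_⟩
    have hb : (0:ℝ) ≤ b := by simpa [ha, inner_zero_left] using hDH hz0
    simpa [ha, inner_zero_left] using hb
  by_contra hcon
  push_neg at hcon
  -- hcon : ∀ x ∈ X, ∃ y ∈ Y, b < ⟪a, u x y⟫
  set F : EuclideanSpace ℝ (Fin n) → EuclideanSpace ℝ (Fin m) → ℝ :=
    fun x y => (inner ℝ a (u x y) : ℝ) with hFdef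
  have hFcont : ∀ y, Continuous fun x => F x y := by
    intro y
    have hc : Continuous fun x => u x y :=
      affine_continuous _ (fun t x₁ x₂ => hu_affine_x y t x₁ x₂)
    exact Continuous.inner continuous_const hc
  -- best responses for each x in X
  have hsel : ∀ x : X, ∃ y, y ∈ Y ∧ b < F x.1 y := by
    intro x
    obtain ⟨y, hy, hby⟩ := hcon x.1 x.2
    exact ⟨y, hy, hby⟩
  choose yc hycY hycF using hsel
  set δ : X → ℝ := fun x => (F x.1 (yc x) - b) / 2 with hδdef
  have hδpos : ∀ x, 0 < δ x := fun x => by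
    have := hycF x; simp only [hδdef]; linarith
  set U : X → Set (EuclideanSpace ℝ (Fin n)) :=
    fun x => (fun x' => F x' (yc x)) ⁻¹' Set.Ioi (b + δ x) with hUdef
  have hUopen : ∀ x, IsOpen (U x) := fun x => (isOpen_Ioi).preimage (hFcont (yc x))
  have hcover : X ⊆ ⋃ x : X, U x := by
    intro x' hx'
    refine Set.mem_iUnion.2 ⟨⟨x', hx'⟩, ?_⟩
    have := hδpos ⟨x', hx'⟩
    simp only [hUdef, Set.mem_preimage, Set.mem_Ioi, hδdef] at this ⊢
    linarith
  obtain ⟨t, ht⟩ := hXcomp.elim_finite_subcover U hUopen hcover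
  have hmem0 : ∃ i ∈ t, x0 ∈ U i := by
    have := ht hx0
    simpa using this
  obtain ⟨i0, hi0t, _⟩ := hmem0
  have htne : t.Nonempty := ⟨i0, hi0t⟩
  set ε : ℝ := t.inf' htne δ with hεdef
  have hεpos : 0 < ε := by
    rw [hεdef, Finset.lt_inf'_iff]
    exact fun i _ => hδpos i
  -- uniform response property
  have hresp : ∀ x ∈ X, ∃ y, y ∈ Y ∧ b + ε ≤ F x y := by
    intro x hx
    have := ht hx
    simp only [Set.mem_iUnion, exists_prop] at this
    obtain ⟨i, hit, hxU⟩ := this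
    simp only [hUdef, Set.mem_preimage, Set.mem_Ioi] at hxU
    refine ⟨yc i, hycY i, ?_⟩
    have hle : ε ≤ δ i := Finset.inf'_le δ hit
    linarith
  -- response function
  set r : EuclideanSpace ℝ (Fin n) → EuclideanSpace ℝ (Fin m) :=
    fun x => if hx : ∃ y, y ∈ Y ∧ b + ε ≤ F x y then hx.choose else y0 with hrdef
  have hrprop : ∀ x ∈ X, r x ∈ Y ∧ b + ε ≤ F x (r x) := by
    intro x hx
    have hex := hresp x hx
    simp only [hrdef, dif_pos hex]
    exact hex.choose_spec
  obtain ⟨σ, hσX, hσ⟩ := happr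
  set s := blackwellSeq σ r with hsdef
  set xs : ℕ → EuclideanSpace ℝ (Fin n) := fun k => (s k).1 with hxsdef
  set ys : ℕ → EuclideanSpace ℝ (Fin m) := fun k => (s k).2 with hysdef
  have hsk : ∀ k, s k = (σ k (fun i => s i), r (σ k (fun i => s i))) :=
    fun k => blackwellSeq_def σ r k
  have hxseq : ∀ k, xs k = σ k (fun i : Fin k => (xs i, ys i)) := by
    intro k
    have : (fun i : Fin k => (xs i, ys i)) = fun i : Fin k => s i := by
      funext i; simp [hxsdef, hysdef]
    rw [this]
    show (s k).1 = σ k fun i => s i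
    rw [hsk k]
  have hxsX : ∀ k, xs k ∈ X := by
    intro k; rw [hxseq k]; exact hσX _ _
  have hysr : ∀ k, ys k = r (xs k) := by
    intro k
    simp only [hysdef, hxsdef, hsk k]
  have hysY : ∀ k, ys k ∈ Y := by
    intro k; rw [hysr k]; exact (hrprop _ (hxsX k)).1
  have htend := hσ xs ys hysY hxseq
  have hanorm : 0 < ‖a‖ := norm_pos_iff.2 ha
  -- lower bound on infDist of averages
  have key : ∀ K : ℕ, 1 ≤ K →
      ε / ‖a‖ ≤ Metric.infDist ((K : ℝ)⁻¹ • ∑ i ∈ Finset.range K, u (xs i) (ys i)) D := by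
    intro K hK
    set z := (K : ℝ)⁻¹ • ∑ i ∈ Finset.range K, u (xs i) (ys i) with hzdef
    have hKpos : (0:ℝ) < K := by exact_mod_cast hK
    have hz : b + ε ≤ (inner ℝ a z : ℝ) := by
      have hinner : (inner ℝ a z : ℝ) =
          (K : ℝ)⁻¹ * ∑ i ∈ Finset.range K, F (xs i) (ys i) := by
        rw [hzdef, real_inner_smul_right, inner_sum]
      have hterm : ∀ i ∈ Finset.range K, b + ε ≤ F (xs i) (ys i) := by
        intro i _
        have := (hrprop _ (hxsX i)).2
        rwa [← hysr i] at this
      have hsum : (K : ℝ) * (b + ε) ≤ ∑ i ∈ Finset.range K, F (xs i) (ys i) := by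
        calc (K : ℝ) * (b + ε) = ∑ _i ∈ Finset.range K, (b + ε) := by
              simp
              ring
          _ ≤ _ := Finset.sum_le_sum hterm
      rw [hinner]
      calc b + ε = (K:ℝ)⁻¹ * ((K:ℝ) * (b + ε)) := by field_simp
        _ ≤ (K:ℝ)⁻¹ * ∑ i ∈ Finset.range K, F (xs i) (ys i) :=
            mul_le_mul_of_nonneg_left hsum (by positivity)
    by_contra hlt
    push_neg at hlt
    obtain ⟨w, hwD, hdw⟩ := (Metric.infDist_lt_iff ⟨z0, hz0⟩).1 hlt
    have hwb : (inner ℝ a w : ℝ) ≤ b := hDH hwD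
    have h1 : ε ≤ (inner ℝ a (z - w) : ℝ) := by
      rw [inner_sub_right]; linarith
    have h2 : (inner ℝ a (z - w) : ℝ) ≤ ‖a‖ * ‖z - w‖ := real_inner_le_norm a (z - w)
    have h3 : ‖z - w‖ = dist z w := (dist_eq_norm z w).symm
    have h4 : dist z w < ε / ‖a‖ := hdw
    rw [h3] at h2
    have : ε < ε := by
      calc ε ≤ ‖a‖ * dist z w := le_trans h1 h2
        _ < ‖a‖ * (ε / ‖a‖) := by
            exact mul_lt_mul_of_pos_left h4 hanorm
        _ = ε := by field_simp
    exact lt_irrefl ε this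
  -- contradiction with convergence
  have hεa : 0 < ε / ‖a‖ := div_pos hεpos hanorm
  have hev := htend.eventually (gt_mem_nhds hεa)
  rw [eventually_atTop] at hev
  obtain ⟨N, hN⟩ := hev
  have h1 := hN (max N 1) (le_max_left _ _)
  have h2 := key (max N 1) (le_max_right _ _)
  exact absurd h2 (not_le.2 h1)
end

section
/- Let T^π be the expected-SARSA operator of a finite discounted MDP with discount γ ∈ (0,1), and let Ω^η be the set of diagonal S×A matrices with diagonal entries in [η, 1] for some η ∈ (0,1). Then for any fixed policy π, Q^π is a globally asymptotically stable equilibrium of the differential inclusion dQ_t/dt ∈ {M(T^π Q_t - Q_t) : M ∈ Ω^η}: every absolutely continuous solution Q_t satisfies ‖Q_t - Q^π‖_∞ ≤ e^{-η(1-γ)t}‖Q_0 - Q^π‖_∞. -/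
open Finset

/-- `Q^π` is a globally asymptotically stable equilibrium of the differential inclusion
`dQ/dt ∈ {M (T^π Q - Q) : M ∈ Ω^η}`: every solution satisfies
`‖Q_t - Q^π‖_∞ ≤ exp (-η (1-γ) t) ‖Q_0 - Q^π‖_∞`. -/
theorem stmt_8 {S A : Type*} [Fintype S] [Fintype A] [Nonempty S] [Nonempty A]
    (P : S → A → S → ℝ) (r : S → A → ℝ) (γ : ℝ)
    (hγ0 : 0 < γ) (hγ1 : γ < 1)
    (hPnn : ∀ s a s', 0 ≤ P s a s') (hPsum : ∀ s a, ∑ s', P s a s' = 1)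
    (π : S → A → ℝ)
    (hπnn : ∀ s a, 0 ≤ π s a) (hπsum : ∀ s, ∑ a, π s a = 1)
    (Tπ : (S → A → ℝ) → (S → A → ℝ))
    (hTπ : ∀ Q s a, Tπ Q s a = r s a + γ * ∑ s', P s a s' * ∑ a', π s' a' * Q s' a')
    (Qπ : S → A → ℝ) (hQπ : Tπ Qπ = Qπ)
    (η : ℝ) (hη0 : 0 < η) (hη1 : η < 1)
    (Q : ℝ → S → A → ℝ)
    -- `Q` is a solution of the differential inclusion: at every time `t` the derivative
    -- equals `M (T^π Q_t - Q_t)` for some diagonal matrix `M ∈ Ω^η`.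
    (hsol : ∀ t : ℝ, ∃ ω : S → A → ℝ,
      (∀ s a, ω s a ∈ Set.Icc η 1) ∧
      ∀ s a, HasDerivAt (fun τ => Q τ s a) (ω s a * (Tπ (Q t) s a - Q t s a)) t) :
    ∀ t : ℝ, 0 ≤ t →
      (⨆ p : S × A, |Q t p.1 p.2 - Qπ p.1 p.2|) ≤
        Real.exp (-η * (1 - γ) * t) * ⨆ p : S × A, |Q 0 p.1 p.2 - Qπ p.1 p.2| := by
  set c : ℝ := η * (1 - γ) with hc
  have hc0 : 0 < c := mul_pos hη0 (by linarith)
  set V : ℝ → ℝ := fun τ => ⨆ p : S × A, |Q τ p.1 p.2 - Qπ p.1 p.2| with hV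
  have hbdd : ∀ τ : ℝ, BddAbove (Set.range fun p : S × A => |Q τ p.1 p.2 - Qπ p.1 p.2|) :=
    fun τ => Set.Finite.bddAbove (Set.finite_range _)
  have hVle : ∀ (τ : ℝ) (p : S × A), |Q τ p.1 p.2 - Qπ p.1 p.2| ≤ V τ :=
    fun τ p => le_ciSup (hbdd τ) p
  have hV0 : ∀ τ, 0 ≤ V τ := fun τ =>
    le_trans (abs_nonneg _) (hVle τ (Classical.arbitrary _))
  -- contraction property
  have hcontr : ∀ (τ : ℝ) (s : S) (a : A), |Tπ (Q τ) s a - Qπ s a| ≤ γ * V τ := by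
    intro τ s a
    have hQπ' : Qπ s a = r s a + γ * ∑ s', P s a s' * ∑ a', π s' a' * Qπ s' a' := by
      conv_lhs => rw [← hQπ]
      exact hTπ Qπ s a
    have heq : Tπ (Q τ) s a - Qπ s a
        = γ * ∑ s', P s a s' * ∑ a', π s' a' * (Q τ s' a' - Qπ s' a') := by
      have inner : ∀ s', ∑ a', π s' a' * (Q τ s' a' - Qπ s' a')
          = (∑ a', π s' a' * Q τ s' a') - ∑ a', π s' a' * Qπ s' a' := by
        intro s'
        rw [← Finset.sum_sub_distrib]
        exact Finset.sum_congr rfl fun a' _ => by ring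
      rw [hTπ, hQπ']
      simp only [inner, mul_sub, Finset.sum_sub_distrib]
      ring
    rw [heq, abs_mul, abs_of_pos hγ0]
    have hinner : ∀ s', |∑ a', π s' a' * (Q τ s' a' - Qπ s' a')| ≤ V τ := by
      intro s'
      calc |∑ a', π s' a' * (Q τ s' a' - Qπ s' a')|
          ≤ ∑ a', |π s' a' * (Q τ s' a' - Qπ s' a')| := Finset.abs_sum_le_sum_abs _ _
        _ ≤ ∑ a', π s' a' * V τ := by
            refine Finset.sum_le_sum fun a' _ => ?_
            rw [abs_mul, abs_of_nonneg (hπnn s' a')]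
            exact mul_le_mul_of_nonneg_left (hVle τ (s', a')) (hπnn s' a')
        _ = V τ := by rw [← Finset.sum_mul, hπsum, one_mul]
    have houter : |∑ s', P s a s' * ∑ a', π s' a' * (Q τ s' a' - Qπ s' a')| ≤ V τ := by
      calc |∑ s', P s a s' * ∑ a', π s' a' * (Q τ s' a' - Qπ s' a')|
          ≤ ∑ s', |P s a s' * ∑ a', π s' a' * (Q τ s' a' - Qπ s' a')| :=
            Finset.abs_sum_le_sum_abs _ _
        _ ≤ ∑ s', P s a s' * V τ := by
            refine Finset.sum_le_sum fun s' _ => ?_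
            rw [abs_mul, abs_of_nonneg (hPnn s a s')]
            exact mul_le_mul_of_nonneg_left (hinner s') (hPnn s a s')
        _ = V τ := by rw [← Finset.sum_mul, hPsum, one_mul]
    exact mul_le_mul_of_nonneg_left houter (le_of_lt hγ0)
  -- continuity of V
  have hQcont : ∀ (s : S) (a : A), Continuous fun τ => Q τ s a := by
    intro s a
    refine continuous_iff_continuousAt.2 fun τ => ?_
    obtain ⟨ω, hω, hd⟩ := hsol τ
    exact (hd s a).continuousAt
  have hVcont : Continuous V := by
    have : Continuous fun τ => Finset.univ.sup' Finset.univ_nonempty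
        (fun p : S × A => |Q τ p.1 p.2 - Qπ p.1 p.2|) := by
      refine Continuous.finset_sup'_apply _ fun p _ => ?_
      exact ((hQcont p.1 p.2).sub continuous_const).abs
    convert this using 2 with τ
    rw [Finset.sup'_univ_eq_ciSup]
  -- key differential inequality on the right difference quotient of V
  have hquot : ∀ x : ℝ, ∀ rr : ℝ, -c * V x < rr →
      ∀ᶠ z in nhdsWithin x (Set.Ioi x), (z - x)⁻¹ * (V z - V x) < rr := by
    intro x rr hrr
    obtain ⟨ω, hω, hd⟩ := hsol x
    set ε : ℝ := (rr + c * V x) / 2 with hε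
    have hε0 : 0 < ε := by
      have : -c * V x < rr := hrr
      simp only [hε]; linarith
    -- little-o bounds for each coordinate
    have hlo : ∀ p : S × A, ∀ᶠ z in nhdsWithin x (Set.Ioi x),
        |Q z p.1 p.2 - Q x p.1 p.2 - (z - x) * (ω p.1 p.2 * (Tπ (Q x) p.1 p.2 - Q x p.1 p.2))|
          ≤ ε * |z - x| := by
      intro p
      have h := (hasDerivAt_iff_isLittleO.1 (hd p.1 p.2)).def hε0
      have h' := h.filter_mono (nhdsWithin_le_nhds (s := Set.Ioi x))
      filter_upwards [h'] with z hz
      simpa [Real.norm_eq_abs, smul_eq_mul] using hz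
    have hsmall : ∀ᶠ z in nhdsWithin x (Set.Ioi x), z ∈ Set.Ioc x (x + 1) := by
      exact Ioc_mem_nhdsGT_of_mem ⟨le_refl x, lt_add_one x⟩
    have hall : ∀ᶠ z in nhdsWithin x (Set.Ioi x), ∀ p : S × A,
        |Q z p.1 p.2 - Q x p.1 p.2 - (z - x) * (ω p.1 p.2 * (Tπ (Q x) p.1 p.2 - Q x p.1 p.2))|
          ≤ ε * |z - x| := Filter.eventually_all.2 hlo
    filter_upwards [hall, hsmall] with z hz hz1
    have hzx : 0 < z - x := sub_pos.2 hz1.1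
    have hzx1 : z - x ≤ 1 := by linarith [hz1.2]
    set h : ℝ := z - x with hh
    -- pointwise bound for each coordinate
    have hcoord : ∀ p : S × A, |Q z p.1 p.2 - Qπ p.1 p.2| ≤ V x + h * (-c * V x + ε) := by
      intro p
      obtain ⟨s, a⟩ := p
      have hωsa := hω s a
      have hω1 : η ≤ ω s a := hωsa.1
      have hω2 : ω s a ≤ 1 := hωsa.2
      have hω0 : 0 < ω s a := lt_of_lt_of_le hη0 hω1
      set f : ℝ := Q x s a - Qπ s a with hf
      set e : ℝ := Tπ (Q x) s a - Qπ s a with he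
      have hfV : |f| ≤ V x := hVle x (s, a)
      have heV : |e| ≤ γ * V x := hcontr x s a
      have hv : Tπ (Q x) s a - Q x s a = e - f := by rw [he, hf]; ring
      have hlin : Q x s a - Qπ s a + h * (ω s a * (Tπ (Q x) s a - Q x s a))
          = (1 - h * ω s a) * f + h * ω s a * e := by
        rw [hv]; simp only [hf]; ring
      have hhω0 : 0 ≤ h * ω s a := mul_nonneg hzx.le hω0.le
      have hhω1 : h * ω s a ≤ 1 := by
        calc h * ω s a ≤ h * 1 := mul_le_mul_of_nonneg_left hω2 hzx.le
          _ ≤ 1 := by linarith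
      have hmain : |Q x s a - Qπ s a + h * (ω s a * (Tπ (Q x) s a - Q x s a))|
          ≤ V x - h * ω s a * (1 - γ) * V x := by
        rw [hlin]
        calc |(1 - h * ω s a) * f + h * ω s a * e|
            ≤ |(1 - h * ω s a) * f| + |h * ω s a * e| := abs_add_le _ _
          _ = (1 - h * ω s a) * |f| + h * ω s a * |e| := by
              rw [abs_mul, abs_mul, abs_of_nonneg (by linarith : (0:ℝ) ≤ 1 - h * ω s a),
                abs_of_nonneg hhω0]
          _ ≤ (1 - h * ω s a) * V x + h * ω s a * (γ * V x) := by
              refine add_le_add (mul_le_mul_of_nonneg_left hfV (by linarith))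
                (mul_le_mul_of_nonneg_left heV hhω0)
          _ = V x - h * ω s a * (1 - γ) * V x := by ring
      have hstep : V x - h * ω s a * (1 - γ) * V x ≤ V x - h * c * V x := by
        have : h * c * V x ≤ h * ω s a * (1 - γ) * V x := by
          have h1 : c ≤ ω s a * (1 - γ) :=
            mul_le_mul_of_nonneg_right hω1 (by linarith)
          have h2 : h * c ≤ h * (ω s a * (1 - γ)) :=
            mul_le_mul_of_nonneg_left h1 hzx.le
          calc h * c * V x ≤ h * (ω s a * (1 - γ)) * V x :=
                mul_le_mul_of_nonneg_right h2 (hV0 x)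
            _ = h * ω s a * (1 - γ) * V x := by ring
        linarith
      calc |Q z s a - Qπ s a|
          = |(Q x s a - Qπ s a + h * (ω s a * (Tπ (Q x) s a - Q x s a)))
              + (Q z s a - Q x s a - h * (ω s a * (Tπ (Q x) s a - Q x s a)))| := by
            congr 1; ring
        _ ≤ |Q x s a - Qπ s a + h * (ω s a * (Tπ (Q x) s a - Q x s a))|
              + |Q z s a - Q x s a - h * (ω s a * (Tπ (Q x) s a - Q x s a))| := abs_add_le _ _
        _ ≤ (V x - h * c * V x) + ε * h := by
            refine add_le_add (le_trans hmain hstep) ?_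
            have := hz (s, a)
            rwa [abs_of_pos hzx] at this
        _ = V x + h * (-c * V x + ε) := by ring
    have hVz : V z ≤ V x + h * (-c * V x + ε) := ciSup_le hcoord
    have : (z - x)⁻¹ * (V z - V x) ≤ -c * V x + ε := by
      rw [← hh, inv_mul_le_iff₀ hzx]
      linarith
    refine lt_of_le_of_lt this ?_
    simp only [hε]; linarith
  -- apply Grönwall
  intro t ht
  have hgron := le_gronwallBound_of_liminf_deriv_right_le (f := V)
    (f' := fun x => -c * V x) (δ := V 0) (K := -c) (ε := 0) (a := 0) (b := t)
    (hVcont.continuousOn)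
    (fun x _ rr hrr => ((hquot x rr hrr).filter_mono le_rfl).frequently)
    (le_refl _) (fun x _ => by simp)
  have := hgron t ⟨ht, le_refl t⟩
  rw [sub_zero, gronwallBound_ε0] at this
  calc V t ≤ V 0 * Real.exp (-c * t) := this
    _ = Real.exp (-η * (1 - γ) * t) * V 0 := by rw [mul_comm, hc]; ring_nf
end

section
/- Performance-difference lemma: for a finite discounted MDP with γ ∈ (0,1) and any two policies π, π', V^{π'}(s₀) - V^{π}(s₀) = (1/(1-γ)) ∑_{s} d^{π'}_{s₀}(s) ∑_a (π'(s,a) - π(s,a)) Q^{π}(s,a), where d^{π'}_{s₀}(s) = (1-γ) ∑_{k=0}^∞ γ^k Pr(s_k = s | s_0 = s₀, π') is the discounted state-occupancy distribution of π' started at s₀. -/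
open Finset

/-- `chainProb Pmat s₀ k s` is the probability that the Markov chain with transition
matrix `Pmat`, started at `s₀`, is in state `s` at time `k`. -/
def chainProb {S : Type*} [Fintype S] [DecidableEq S]
    (Pmat : S → S → ℝ) (s₀ : S) : ℕ → S → ℝ
  | 0 => fun s => if s = s₀ then 1 else 0
  | k + 1 => fun s => ∑ s', chainProb Pmat s₀ k s' * Pmat s' s

lemma chainProb_nonneg {S : Type*} [Fintype S] [DecidableEq S]
    (Pmat : S → S → ℝ) (hnn : ∀ s s', 0 ≤ Pmat s s') (s₀ : S) :
    ∀ k s, 0 ≤ chainProb Pmat s₀ k s := by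
  intro k
  induction k with
  | zero =>
    intro s
    simp only [chainProb]
    split <;> norm_num
  | succ k ih =>
    intro s
    exact Finset.sum_nonneg fun s' _ => mul_nonneg (ih s') (hnn s' s)

lemma chainProb_sum {S : Type*} [Fintype S] [DecidableEq S]
    (Pmat : S → S → ℝ) (hrow : ∀ s, ∑ s', Pmat s s' = 1) (s₀ : S) :
    ∀ k, ∑ s, chainProb Pmat s₀ k s = 1 := by
  intro k
  induction k with
  | zero => simp [chainProb]
  | succ k ih =>
    simp only [chainProb]
    rw [Finset.sum_comm]
    simp_rw [← Finset.mul_sum, hrow, mul_one]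
    exact ih

lemma chainProb_le_one {S : Type*} [Fintype S] [DecidableEq S]
    (Pmat : S → S → ℝ) (hnn : ∀ s s', 0 ≤ Pmat s s')
    (hrow : ∀ s, ∑ s', Pmat s s' = 1) (s₀ : S) (k : ℕ) (s : S) :
    chainProb Pmat s₀ k s ≤ 1 := by
  calc chainProb Pmat s₀ k s ≤ ∑ t, chainProb Pmat s₀ k t :=
        Finset.single_le_sum (fun t _ => chainProb_nonneg Pmat hnn s₀ k t) (Finset.mem_univ s)
    _ = 1 := chainProb_sum Pmat hrow s₀ k

/-- Core analytic part of the performance-difference lemma. -/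
lemma perf_diff_core {S : Type*} [Fintype S] [DecidableEq S]
    (Pmat : S → S → ℝ) (hnn : ∀ s s', 0 ≤ Pmat s s')
    (hrow : ∀ s, ∑ s', Pmat s s' = 1)
    (γ : ℝ) (hγ0 : 0 < γ) (hγ1 : γ < 1)
    (Δ g : S → ℝ) (key : ∀ s, Δ s = g s + γ * ∑ s', Pmat s s' * Δ s') (s₀ : S) :
    Δ s₀ = ∑' k : ℕ, γ ^ k * ∑ s, chainProb Pmat s₀ k s * g s := by
  set c : ℕ → ℝ := fun k => γ ^ k * ∑ s, chainProb Pmat s₀ k s * g s with hc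
  -- hpartial sum identity
  have hpartial : ∀ n, Δ s₀ = (∑ k ∈ Finset.range n, c k)
      + γ ^ n * ∑ s, chainProb Pmat s₀ n s * Δ s := by
    intro n
    induction n with
    | zero =>
      simp [chainProb]
    | succ n ih =>
      rw [Finset.sum_range_succ]
      have step : (∑ s, chainProb Pmat s₀ n s * Δ s)
          = (∑ s, chainProb Pmat s₀ n s * g s)
            + γ * ∑ s, chainProb Pmat s₀ (n + 1) s * Δ s := by
        calc ∑ s, chainProb Pmat s₀ n s * Δ s
            = ∑ s, chainProb Pmat s₀ n s * (g s + γ * ∑ s', Pmat s s' * Δ s') := by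
              exact Finset.sum_congr rfl fun s _ => by rw [← key s]
          _ = (∑ s, chainProb Pmat s₀ n s * g s)
              + γ * ∑ s, ∑ s', chainProb Pmat s₀ n s * Pmat s s' * Δ s' := by
              simp only [mul_add, Finset.sum_add_distrib]
              congr 1
              rw [Finset.mul_sum]
              refine Finset.sum_congr rfl fun s _ => ?_
              rw [mul_left_comm]
              congr 1
              rw [Finset.mul_sum]
              exact Finset.sum_congr rfl fun s' _ => (mul_assoc _ _ _).symm
          _ = (∑ s, chainProb Pmat s₀ n s * g s)
              + γ * ∑ s, chainProb Pmat s₀ (n + 1) s * Δ s := by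
              congr 1
              have hstep : ∀ s' : S, chainProb Pmat s₀ (n + 1) s' * Δ s'
                  = ∑ t, chainProb Pmat s₀ n t * Pmat t s' * Δ s' := by
                intro s'
                simp only [chainProb, Finset.sum_mul]
              simp_rw [hstep]
              rw [Finset.sum_comm]
      rw [ih, step]
      ring
  -- summability
  set C : ℝ := ∑ s, |g s| with hC
  have hCnn : 0 ≤ C := Finset.sum_nonneg fun s _ => abs_nonneg _
  have hcbound : ∀ k, |c k| ≤ γ ^ k * C := by
    intro k
    rw [abs_mul, abs_pow, abs_of_pos hγ0]
    refine mul_le_mul_of_nonneg_left ?_ (pow_nonneg hγ0.le k)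
    calc |∑ s, chainProb Pmat s₀ k s * g s| ≤ ∑ s, |chainProb Pmat s₀ k s * g s| :=
          Finset.abs_sum_le_sum_abs _ _
      _ ≤ ∑ s, |g s| := by
          refine Finset.sum_le_sum fun s _ => ?_
          rw [abs_mul, abs_of_nonneg (chainProb_nonneg Pmat hnn s₀ k s)]
          exact mul_le_of_le_one_left (abs_nonneg _) (chainProb_le_one Pmat hnn hrow s₀ k s)
  have hgsum : Summable (fun k : ℕ => γ ^ k * C) :=
    (summable_geometric_of_lt_one hγ0.le hγ1).mul_right C
  have hsum : Summable c :=
    Summable.of_norm_bounded hgsum (by simpa [Real.norm_eq_abs] using hcbound)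
  -- remainder tends to zero
  have hrem : Filter.Tendsto (fun n => γ ^ n * ∑ s, chainProb Pmat s₀ n s * Δ s)
      Filter.atTop (nhds 0) := by
    set M : ℝ := ∑ s, |Δ s| with hM
    have hbound : ∀ n, ‖γ ^ n * ∑ s, chainProb Pmat s₀ n s * Δ s‖ ≤ γ ^ n * M := by
      intro n
      rw [Real.norm_eq_abs, abs_mul, abs_pow, abs_of_pos hγ0]
      refine mul_le_mul_of_nonneg_left ?_ (pow_nonneg hγ0.le n)
      calc |∑ s, chainProb Pmat s₀ n s * Δ s| ≤ ∑ s, |chainProb Pmat s₀ n s * Δ s| :=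
            Finset.abs_sum_le_sum_abs _ _
        _ ≤ ∑ s, |Δ s| := by
            refine Finset.sum_le_sum fun s _ => ?_
            rw [abs_mul, abs_of_nonneg (chainProb_nonneg Pmat hnn s₀ n s)]
            nlinarith [chainProb_le_one Pmat hnn hrow s₀ n s, abs_nonneg (Δ s),
              chainProb_nonneg Pmat hnn s₀ n s]
    have hγpow : Filter.Tendsto (fun n : ℕ => γ ^ n * M) Filter.atTop (nhds 0) := by
      have := tendsto_pow_atTop_nhds_zero_of_lt_one hγ0.le hγ1
      simpa using this.mul_const M
    exact squeeze_zero_norm hbound hγpow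
  -- conclude
  have h1 : Filter.Tendsto (fun n => ∑ k ∈ Finset.range n, c k) Filter.atTop
      (nhds (∑' k, c k)) := hsum.hasSum.tendsto_sum_nat
  have h2 : Filter.Tendsto (fun n => ∑ k ∈ Finset.range n, c k) Filter.atTop
      (nhds (Δ s₀)) := by
    have : (fun n => ∑ k ∈ Finset.range n, c k)
        = fun n => Δ s₀ - γ ^ n * ∑ s, chainProb Pmat s₀ n s * Δ s := by
      funext n
      rw [hpartial n]; ring
    rw [this]
    simpa using (tendsto_const_nhds (x := Δ s₀)).sub hrem
  exact tendsto_nhds_unique h2 h1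

/-- Performance-difference lemma:
`V^{π'}(s₀) - V^π(s₀) = (1/(1-γ)) ∑_s d^{π'}_{s₀}(s) ⟨π'(s) - π(s), Q^π(s)⟩`,
where `d^{π'}_{s₀}(s) = (1-γ) ∑_k γ^k Pr(s_k = s | s_0 = s₀, π')`. -/
theorem stmt_11 {S A : Type*} [Fintype S] [Fintype A] [DecidableEq S]
    [Nonempty S] [Nonempty A]
    (P : S → A → S → ℝ) (r : S → A → ℝ) (γ : ℝ)
    (hγ0 : 0 < γ) (hγ1 : γ < 1)
    (hPnn : ∀ s a s', 0 ≤ P s a s') (hPsum : ∀ s a, ∑ s', P s a s' = 1)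
    (π π' : S → A → ℝ)
    (hπnn : ∀ s a, 0 ≤ π s a) (hπsum : ∀ s, ∑ a, π s a = 1)
    (hπ'nn : ∀ s a, 0 ≤ π' s a) (hπ'sum : ∀ s, ∑ a, π' s a = 1)
    (Qπ Qπ' : S → A → ℝ)
    (hQπ : ∀ s a, Qπ s a = r s a + γ * ∑ s', P s a s' * ∑ a', π s' a' * Qπ s' a')
    (hQπ' : ∀ s a, Qπ' s a = r s a + γ * ∑ s', P s a s' * ∑ a', π' s' a' * Qπ' s' a')
    (s₀ : S) :
    (∑ a, π' s₀ a * Qπ' s₀ a) - (∑ a, π s₀ a * Qπ s₀ a) =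
      (1 / (1 - γ)) * ∑ s,
        ((1 - γ) * ∑' k : ℕ,
            γ ^ k * chainProb (fun t t' => ∑ a, π' t a * P t a t') s₀ k s) *
          ∑ a, (π' s a - π s a) * Qπ s a := by
  set Pmat : S → S → ℝ := fun t t' => ∑ a, π' t a * P t a t' with hPmat
  have hnn : ∀ t t', 0 ≤ Pmat t t' := fun t t' =>
    Finset.sum_nonneg fun a _ => mul_nonneg (hπ'nn t a) (hPnn t a t')
  have hrow : ∀ t, ∑ t', Pmat t t' = 1 := by
    intro t
    rw [hPmat]
    rw [Finset.sum_comm]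
    simp_rw [← Finset.mul_sum, hPsum, mul_one]
    exact hπ'sum t
  set Δ : S → ℝ := fun s => (∑ a, π' s a * Qπ' s a) - (∑ a, π s a * Qπ s a) with hΔ
  set g : S → ℝ := fun s => ∑ a, (π' s a - π s a) * Qπ s a with hg
  have key : ∀ s, Δ s = g s + γ * ∑ s', Pmat s s' * Δ s' := by
    intro s
    have h2 : ∀ a, Qπ' s a - Qπ s a = γ * ∑ s', P s a s' * Δ s' := by
      intro a
      rw [hQπ', hQπ]
      have : ∑ s', P s a s' * Δ s'
          = (∑ s', P s a s' * ∑ a', π' s' a' * Qπ' s' a')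
            - (∑ s', P s a s' * ∑ a', π s' a' * Qπ s' a') := by
        rw [← Finset.sum_sub_distrib]
        exact Finset.sum_congr rfl fun s' _ => by rw [hΔ]; ring
      rw [this]; ring
    have h3 : Δ s - g s = ∑ a, π' s a * (Qπ' s a - Qπ s a) := by
      rw [hΔ, hg]
      simp only [← Finset.sum_sub_distrib]
      exact Finset.sum_congr rfl fun a _ => by ring
    have h4 : Δ s - g s = γ * ∑ s', Pmat s s' * Δ s' := by
      rw [h3]
      calc ∑ a, π' s a * (Qπ' s a - Qπ s a)
          = ∑ a, π' s a * (γ * ∑ s', P s a s' * Δ s') := by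
            exact Finset.sum_congr rfl fun a _ => by rw [h2]
        _ = γ * ∑ a, ∑ s', π' s a * P s a s' * Δ s' := by
            rw [Finset.mul_sum]
            refine Finset.sum_congr rfl fun a _ => ?_
            rw [mul_left_comm]
            congr 1
            rw [Finset.mul_sum]
            exact Finset.sum_congr rfl fun s' _ => (mul_assoc _ _ _).symm
        _ = γ * ∑ s', Pmat s s' * Δ s' := by
            congr 1
            rw [Finset.sum_comm]
            exact Finset.sum_congr rfl fun s' _ => by rw [hPmat, Finset.sum_mul]
    linarith [h4]
  have core := perf_diff_core Pmat hnn hrow γ hγ0 hγ1 Δ g key s₀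
  have hne : (1 : ℝ) - γ ≠ 0 := by linarith
  -- summability for the swap
  have hsummand : ∀ s, Summable (fun k : ℕ => γ ^ k * chainProb Pmat s₀ k s * g s) := by
    intro s
    apply Summable.of_norm_bounded (g := fun k => γ ^ k * |g s|)
      ((summable_geometric_of_lt_one hγ0.le hγ1).mul_right _)
    intro k
    rw [Real.norm_eq_abs, abs_mul, abs_mul, abs_pow, abs_of_pos hγ0]
    refine mul_le_mul_of_nonneg_right ?_ (abs_nonneg _)
    rw [abs_of_nonneg (chainProb_nonneg Pmat hnn s₀ k s)]
    nlinarith [chainProb_le_one Pmat hnn hrow s₀ k s, chainProb_nonneg Pmat hnn s₀ k s,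
      pow_nonneg hγ0.le k]
  have hswap : ∑ s, (∑' k : ℕ, γ ^ k * chainProb Pmat s₀ k s) * g s
      = ∑' k : ℕ, γ ^ k * ∑ s, chainProb Pmat s₀ k s * g s := by
    calc ∑ s, (∑' k : ℕ, γ ^ k * chainProb Pmat s₀ k s) * g s
        = ∑ s, ∑' k : ℕ, γ ^ k * chainProb Pmat s₀ k s * g s := by
          exact Finset.sum_congr rfl fun s _ => by
            rw [← tsum_mul_right]
      _ = ∑' k : ℕ, ∑ s, γ ^ k * chainProb Pmat s₀ k s * g s := by
          rw [Summable.tsum_finsetSum fun s _ => hsummand s]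
      _ = ∑' k : ℕ, γ ^ k * ∑ s, chainProb Pmat s₀ k s * g s := by
          refine tsum_congr fun k => ?_
          rw [Finset.mul_sum]
          exact Finset.sum_congr rfl fun s _ => by ring
  have hrhs : (1 / (1 - γ)) * ∑ s,
      ((1 - γ) * ∑' k : ℕ, γ ^ k * chainProb Pmat s₀ k s) * g s
      = ∑ s, (∑' k : ℕ, γ ^ k * chainProb Pmat s₀ k s) * g s := by
    rw [Finset.mul_sum]
    refine Finset.sum_congr rfl fun s _ => ?_
    rw [mul_assoc (1 - γ), ← mul_assoc (1 / (1 - γ)), one_div, inv_mul_cancel₀ hne, one_mul]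
  calc Δ s₀ = ∑' k : ℕ, γ ^ k * ∑ s, chainProb Pmat s₀ k s * g s := core
    _ = ∑ s, (∑' k : ℕ, γ ^ k * chainProb Pmat s₀ k s) * g s := hswap.symm
    _ = (1 / (1 - γ)) * ∑ s,
        ((1 - γ) * ∑' k : ℕ, γ ^ k * chainProb Pmat s₀ k s) * g s := hrhs.symm
end

section
/- Let Q ∈ ℝ^{|A|} and π ∈ Δ(A) with regret vector R = Q - ⟨π, Q⟩·𝟏. If [R]^+ ≠ 0 and π̂ = [R]^+ / ‖[R]^+‖₁ is the regret-matching policy, then ⟨π̂ - π, Q⟩ ≥ 0, with strict inequality whenever max_a Q(a) > ⟨π, Q⟩. -/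
open Finset

/-- One-step improvement of the regret-matching policy: if the positive-part regret vector
is nonzero and `π̂ = [R]⁺/‖[R]⁺‖₁`, then `⟨π̂ - π, Q⟩ ≥ 0`, strictly whenever
`max_a Q(a) > ⟨π, Q⟩`. -/
theorem stmt_13 {A : Type*} [Fintype A] [Nonempty A]
    (Q : A → ℝ) (π : A → ℝ)
    (hπnn : ∀ a, 0 ≤ π a) (hπsum : ∑ a, π a = 1)
    (R : A → ℝ) (hR : ∀ a, R a = Q a - ∑ b, π b * Q b)
    (hRpos : ∃ a, 0 < max (R a) 0)
    (πhat : A → ℝ) (hπhat : ∀ a, πhat a = max (R a) 0 / ∑ b, max (R b) 0) :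
    (0 ≤ ∑ a, (πhat a - π a) * Q a) ∧
      ((∑ b, π b * Q b) < (⨆ a, Q a) → 0 < ∑ a, (πhat a - π a) * Q a) := by
  set V : ℝ := ∑ b, π b * Q b with hV
  set S : ℝ := ∑ b, max (R b) 0 with hS
  obtain ⟨a₁, ha₁⟩ := hRpos
  have hSpos : 0 < S :=
    Finset.sum_pos' (fun a _ => le_max_right _ _) ⟨a₁, Finset.mem_univ a₁, ha₁⟩
  have hterm : ∀ a, 0 ≤ max (R a) 0 * R a := by
    intro a
    rcases le_or_gt (R a) 0 with h | h
    · simp [max_eq_right h]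
    · exact mul_nonneg (le_max_of_le_left h.le) h.le
  have key : ∑ a, (πhat a - π a) * Q a = (∑ a, max (R a) 0 * R a) / S := by
    have h2 : ∑ a, max (R a) 0 * R a = (∑ a, max (R a) 0 * Q a) - V * S := by
      have : ∀ a, max (R a) 0 * R a = max (R a) 0 * Q a - max (R a) 0 * V := by
        intro a; rw [hR a]; ring
      rw [Finset.sum_congr rfl (fun a _ => this a), Finset.sum_sub_distrib,
        ← Finset.sum_mul, ← hS, mul_comm]
    have h1 : ∑ a, πhat a * Q a = (∑ a, max (R a) 0 * Q a) / S := by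
      rw [Finset.sum_div]
      exact Finset.sum_congr rfl fun a _ => by rw [hπhat a, div_mul_eq_mul_div]
    have h3 : ∑ a, (πhat a - π a) * Q a = (∑ a, πhat a * Q a) - V := by
      rw [hV]
      rw [← Finset.sum_sub_distrib]
      exact Finset.sum_congr rfl fun a _ => by ring
    rw [h3, h1, h2, sub_div, mul_div_assoc, div_self hSpos.ne', mul_one]
  constructor
  · rw [key]
    exact div_nonneg (Finset.sum_nonneg fun a _ => hterm a) hSpos.le
  · intro hlt
    obtain ⟨a₀, ha₀⟩ := Finite.exists_max Q
    have hsup : (⨆ a, Q a) ≤ Q a₀ := ciSup_le ha₀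
    have hRa₀ : 0 < R a₀ := by rw [hR a₀]; linarith
    rw [key]
    apply div_pos _ hSpos
    refine Finset.sum_pos' (fun a _ => hterm a) ⟨a₀, Finset.mem_univ a₀, ?_⟩
    exact mul_pos (lt_max_of_lt_left hRa₀) hRa₀
end

section
/- Let L(π) = ∑_{s∈S} (V^{π*}(s) - V^π(s)) where π* is an optimal policy of a finite discounted MDP. Then L(π) ≥ 0 for all policies π, L(π) = 0 if and only if π is optimal, and along any trajectory π_t of the differential inclusion dπ_t(s)/dt ∈ {ω(s)(RM(π_t(s), Q^{π_t}(s)) - π_t(s)) : ω(s) ∈ [η,1]}, the derivative satisfies dL(π_t)/dt ≤ 0. -/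
open Finset


/-- A strict contraction with a stochastic kernel has only the zero fixed point. -/
lemma aux_contraction_eq_zero {S : Type*} [Fintype S] [Nonempty S] {γ : ℝ}
    (hγ0 : 0 ≤ γ) (hγ1 : γ < 1) (K : S → S → ℝ)
    (hK : ∀ s s', 0 ≤ K s s') (hKs : ∀ s, ∑ s', K s s' = 1)
    (v : S → ℝ) (hv : ∀ s, v s = γ * ∑ s', K s s' * v s') : v = 0 := by
  obtain ⟨s₀, -, hs₀⟩ := Finset.exists_max_image Finset.univ (fun s => |v s|)
    ⟨Classical.arbitrary S, Finset.mem_univ _⟩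
  have hb : ∀ s, |v s| ≤ |v s₀| := fun s => hs₀ s (Finset.mem_univ s)
  have hkey : |v s₀| ≤ γ * |v s₀| := by
    calc |v s₀| = γ * |∑ s', K s₀ s' * v s'| := by
          rw [hv s₀, abs_mul, abs_of_nonneg hγ0]
      _ ≤ γ * ∑ s', K s₀ s' * |v s₀| := by
          apply mul_le_mul_of_nonneg_left _ hγ0
          calc |∑ s', K s₀ s' * v s'| ≤ ∑ s', |K s₀ s' * v s'| :=
                Finset.abs_sum_le_sum_abs _ _
            _ = ∑ s', K s₀ s' * |v s'| := by
                refine Finset.sum_congr rfl fun s' _ => ?_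
                rw [abs_mul, abs_of_nonneg (hK _ _)]
            _ ≤ ∑ s', K s₀ s' * |v s₀| :=
                Finset.sum_le_sum fun s' _ =>
                  mul_le_mul_of_nonneg_left (hb s') (hK _ _)
      _ = γ * |v s₀| := by rw [← Finset.sum_mul, hKs, one_mul]
  have h0 : |v s₀| ≤ 0 := by nlinarith [abs_nonneg (v s₀)]
  funext s
  exact abs_nonpos_iff.mp ((hb s).trans h0)

/-- Comparison: `f = g + γ K f` with `g ≥ 0` and `K` stochastic forces `f ≥ 0`. -/
lemma aux_comparison_nonneg {S : Type*} [Fintype S] [Nonempty S] {γ : ℝ}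
    (hγ0 : 0 ≤ γ) (hγ1 : γ < 1) (K : S → S → ℝ)
    (hK : ∀ s s', 0 ≤ K s s') (hKs : ∀ s, ∑ s', K s s' = 1)
    (g f : S → ℝ) (hg : ∀ s, 0 ≤ g s)
    (hf : ∀ s, f s = g s + γ * ∑ s', K s s' * f s') : ∀ s, 0 ≤ f s := by
  obtain ⟨s₀, -, hs₀⟩ := Finset.exists_min_image Finset.univ f
    ⟨Classical.arbitrary S, Finset.mem_univ _⟩
  have hb : ∀ s, f s₀ ≤ f s := fun s => hs₀ s (Finset.mem_univ s)
  have hkey : γ * f s₀ ≤ f s₀ := by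
    calc γ * f s₀ = γ * ∑ s', K s₀ s' * f s₀ := by
          rw [← Finset.sum_mul, hKs, one_mul]
      _ ≤ γ * ∑ s', K s₀ s' * f s' := by
          apply mul_le_mul_of_nonneg_left _ hγ0
          exact Finset.sum_le_sum fun s' _ =>
            mul_le_mul_of_nonneg_left (hb s') (hK _ _)
      _ ≤ g s₀ + γ * ∑ s', K s₀ s' * f s' := by linarith [hg s₀]
      _ = f s₀ := (hf s₀).symm
  have h0 : 0 ≤ f s₀ := by nlinarith
  exact fun s => h0.trans (hb s)

/-- A determinant of a matrix with entries differentiable at `t` is differentiable at `t`. -/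
lemma aux_det_differentiableAt {S : Type*} [Fintype S] [DecidableEq S]
    (N : ℝ → Matrix S S ℝ) (t : ℝ)
    (h : ∀ i j, DifferentiableAt ℝ (fun u => N u i j) t) :
    DifferentiableAt ℝ (fun u => (N u).det) t := by
  have hrw : (fun u => (N u).det)
      = fun u => ∑ σ : Equiv.Perm S, ((Equiv.Perm.sign σ : ℤ) : ℝ) * ∏ i, N u (σ i) i :=
    funext fun u => Matrix.det_apply' (N u)
  rw [hrw]
  exact DifferentiableAt.fun_sum fun σ _ =>
    DifferentiableAt.const_mul
      ((HasDerivAt.fun_finsetProd fun i _ => (h (σ i) i).hasDerivAt).differentiableAt) _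

/-- The regret-matching map does not decrease the expected value. -/
lemma aux_rm_step {A : Type*} [Fintype A] (Q π h : A → ℝ)
    (hc1 : (∃ a, 0 < max (Q a - ∑ b, π b * Q b) 0) →
      ∀ a, h a = max (Q a - ∑ b, π b * Q b) 0 / ∑ b, max (Q b - ∑ c, π c * Q c) 0)
    (hc0 : ¬ (∃ a, 0 < max (Q a - ∑ b, π b * Q b) 0) → ∀ a, h a = π a) :
    ∑ a, π a * Q a ≤ ∑ a, h a * Q a := by
  set v := ∑ b, π b * Q b with hv
  by_cases hc : ∃ a, 0 < max (Q a - v) 0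
  · set Z := ∑ b, max (Q b - v) 0 with hZ
    have hZpos : 0 < Z := by
      obtain ⟨a, ha⟩ := hc
      have hle : max (Q a - v) 0 ≤ Z := by
        rw [hZ]
        exact Finset.single_le_sum (f := fun b => max (Q b - v) 0)
          (fun b _ => le_max_right _ 0) (Finset.mem_univ a)
      exact lt_of_lt_of_le ha hle
    have hrw : ∑ a, h a * Q a = (∑ a, max (Q a - v) 0 * Q a) / Z := by
      rw [Finset.sum_div]
      refine Finset.sum_congr rfl fun a _ => ?_
      rw [hc1 hc a]; ring
    rw [hrw, le_div_iff₀ hZpos]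
    have key : ∑ a, max (Q a - v) 0 * Q a - v * Z = ∑ a, max (Q a - v) 0 * (Q a - v) := by
      rw [hZ, Finset.mul_sum, ← Finset.sum_sub_distrib]
      refine Finset.sum_congr rfl fun a _ => ?_; ring
    have pos : 0 ≤ ∑ a, max (Q a - v) 0 * (Q a - v) := by
      refine Finset.sum_nonneg fun a _ => ?_
      rcases le_total (Q a - v) 0 with h' | h'
      · rw [max_eq_right h']; simp
      · rw [max_eq_left h']; exact mul_self_nonneg _
    linarith
  · have heq : ∀ a, h a = π a := hc0 hc
    simp [heq, hv]


/-- The optimality gap `L(π) = ∑_s (V^{π*}(s) - V^π(s))` is a Lyapunov function for the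
regret-matching differential inclusion: `L ≥ 0`, `L(π) = 0` iff `π` is optimal, and
`dL/dt ≤ 0` along trajectories of
`dπ_t(s)/dt ∈ {ω(s)(RM(π_t(s), Q^{π_t}(s)) - π_t(s)) : ω(s) ∈ [η,1]}`. -/
theorem stmt_15 {S A : Type*} [Fintype S] [Fintype A] [Nonempty S] [Nonempty A]
    (P : S → A → S → ℝ) (r : S → A → ℝ) (γ : ℝ)
    (hγ0 : 0 < γ) (hγ1 : γ < 1)
    (hPnn : ∀ s a s', 0 ≤ P s a s') (hPsum : ∀ s a, ∑ s', P s a s' = 1)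
    -- an optimal policy `π*` with action-value function `Q*`
    (πstar : S → A → ℝ)
    (hπstarnn : ∀ s a, 0 ≤ πstar s a) (hπstarsum : ∀ s, ∑ a, πstar s a = 1)
    (Qstar : S → A → ℝ)
    (hQstar : ∀ s a,
      Qstar s a = r s a + γ * ∑ s', P s a s' * ∑ a', πstar s' a' * Qstar s' a')
    (hopt : ∀ (π' Qπ' : S → A → ℝ),
      (∀ s a, 0 ≤ π' s a) → (∀ s, ∑ a, π' s a = 1) →
      (∀ s a, Qπ' s a = r s a + γ * ∑ s', P s a s' * ∑ a', π' s' a' * Qπ' s' a') →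
      ∀ s, ∑ a, π' s a * Qπ' s a ≤ ∑ a, πstar s a * Qstar s a)
    (η : ℝ) (hη0 : 0 < η) (hη1 : η < 1)
    -- a trajectory `π_t` of policies together with its action-value functions `Q^{π_t}`
    (πt Qt : ℝ → S → A → ℝ)
    (hπtnn : ∀ t s a, 0 ≤ πt t s a) (hπtsum : ∀ t s, ∑ a, πt t s a = 1)
    (hQt : ∀ t s a,
      Qt t s a = r s a + γ * ∑ s', P s a s' * ∑ a', πt t s' a' * Qt t s' a')
    -- the regret-matching map evaluated along the trajectory
    (πhat : ℝ → S → A → ℝ)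
    (hπhat : ∀ t s, (∃ a, 0 < max (Qt t s a - ∑ b, πt t s b * Qt t s b) 0) →
      ∀ a, πhat t s a =
        max (Qt t s a - ∑ b, πt t s b * Qt t s b) 0 /
          ∑ b, max (Qt t s b - ∑ c, πt t s c * Qt t s c) 0)
    (hπhat0 : ∀ t s, ¬ (∃ a, 0 < max (Qt t s a - ∑ b, πt t s b * Qt t s b) 0) →
      ∀ a, πhat t s a = πt t s a)
    -- `π_t` solves the differential inclusion
    (hsol : ∀ t s, ∃ ω : ℝ, ω ∈ Set.Icc η 1 ∧
      ∀ a, HasDerivAt (fun u => πt u s a) (ω * (πhat t s a - πt t s a)) t) :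
    -- (1) `L(π) ≥ 0` for every policy `π`
    (∀ (π' Qπ' : S → A → ℝ),
      (∀ s a, 0 ≤ π' s a) → (∀ s, ∑ a, π' s a = 1) →
      (∀ s a, Qπ' s a = r s a + γ * ∑ s', P s a s' * ∑ a', π' s' a' * Qπ' s' a') →
      0 ≤ ∑ s, (∑ a, πstar s a * Qstar s a - ∑ a, π' s a * Qπ' s a)) ∧
    -- (2) `L(π) = 0` iff `π` is optimal
    (∀ (π' Qπ' : S → A → ℝ),
      (∀ s a, 0 ≤ π' s a) → (∀ s, ∑ a, π' s a = 1) →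
      (∀ s a, Qπ' s a = r s a + γ * ∑ s', P s a s' * ∑ a', π' s' a' * Qπ' s' a') →
      ((∑ s, (∑ a, πstar s a * Qstar s a - ∑ a, π' s a * Qπ' s a)) = 0 ↔
        ∀ (π'' Qπ'' : S → A → ℝ),
          (∀ s a, 0 ≤ π'' s a) → (∀ s, ∑ a, π'' s a = 1) →
          (∀ s a, Qπ'' s a = r s a + γ * ∑ s', P s a s' * ∑ a', π'' s' a' * Qπ'' s' a') →
          ∀ s, ∑ a, π'' s a * Qπ'' s a ≤ ∑ a, π' s a * Qπ' s a)) ∧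
    -- (3) `dL/dt ≤ 0` along the trajectory
    (∀ t d : ℝ,
      HasDerivAt (fun u => ∑ s, (∑ a, πstar s a * Qstar s a - ∑ a, πt u s a * Qt u s a)) d t →
      d ≤ 0) := by
  classical
  refine ⟨?_, ?_, ?_⟩
  · -- (1)
    intro π' Qπ' h1 h2 h3
    exact Finset.sum_nonneg fun s _ => sub_nonneg.mpr (hopt π' Qπ' h1 h2 h3 s)
  · -- (2)
    intro π' Qπ' h1 h2 h3
    constructor
    · intro hzero π'' Qπ'' g1 g2 g3 s
      have hterm := (Finset.sum_eq_zero_iff_of_nonneg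
        (fun s (_ : s ∈ Finset.univ) => sub_nonneg.mpr (hopt π' Qπ' h1 h2 h3 s))).mp hzero
      have heq := hterm s (Finset.mem_univ s)
      have := hopt π'' Qπ'' g1 g2 g3 s
      linarith
    · intro hall
      have h1' := hall πstar Qstar hπstarnn hπstarsum hQstar
      apply Finset.sum_eq_zero
      intro s _
      have := hopt π' Qπ' h1 h2 h3 s
      have := h1' s
      linarith
  · -- (3)
    intro t d hd
    choose ω hωmem hωd using hsol t
    -- the transition matrix of `π_t` and the Bellman operator matrix
    set Mm : ℝ → Matrix S S ℝ :=
      fun u => (1 : Matrix S S ℝ) - γ • Matrix.of fun s s' => ∑ a, πt u s a * P s a s'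
      with hMm
    have hPmnn : ∀ (u : ℝ) s s', (0 : ℝ) ≤ ∑ a, πt u s a * P s a s' :=
      fun u s s' => Finset.sum_nonneg fun a _ => mul_nonneg (hπtnn u s a) (hPnn s a s')
    have hPmsum : ∀ (u : ℝ) s, ∑ s', ∑ a, πt u s a * P s a s' = 1 := by
      intro u s
      rw [Finset.sum_comm]
      calc ∑ a, ∑ s', πt u s a * P s a s'
          = ∑ a, πt u s a * ∑ s', P s a s' :=
            Finset.sum_congr rfl fun a _ => (Finset.mul_sum _ _ _).symm
        _ = 1 := by simp only [hPsum, mul_one]; exact hπtsum u s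
    -- Bellman equation for the state-value function
    have hBell : ∀ (u : ℝ) s, (∑ a, πt u s a * Qt u s a)
        = (∑ a, πt u s a * r s a)
          + γ * ∑ s', (∑ a, πt u s a * P s a s') * (∑ a', πt u s' a' * Qt u s' a') := by
      intro u s
      calc ∑ a, πt u s a * Qt u s a
          = ∑ a, (πt u s a * r s a
              + γ * (πt u s a * ∑ s', P s a s' * (∑ a', πt u s' a' * Qt u s' a'))) := by
            refine Finset.sum_congr rfl fun a _ => ?_
            rw [hQt u s a]; ring
        _ = (∑ a, πt u s a * r s a)
            + γ * ∑ a, πt u s a * ∑ s', P s a s' * (∑ a', πt u s' a' * Qt u s' a') := by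
            rw [Finset.sum_add_distrib, Finset.mul_sum]
        _ = (∑ a, πt u s a * r s a)
            + γ * ∑ s', (∑ a, πt u s a * P s a s') * (∑ a', πt u s' a' * Qt u s' a') := by
            congr 1
            congr 1
            calc ∑ a, πt u s a * ∑ s', P s a s' * (∑ a', πt u s' a' * Qt u s' a')
                = ∑ a, ∑ s', πt u s a * (P s a s' * (∑ a', πt u s' a' * Qt u s' a')) :=
                  Finset.sum_congr rfl fun a _ => Finset.mul_sum _ _ _
              _ = ∑ s', ∑ a, πt u s a * (P s a s' * (∑ a', πt u s' a' * Qt u s' a')) :=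
                  Finset.sum_comm
              _ = ∑ s', (∑ a, πt u s a * P s a s') * (∑ a', πt u s' a' * Qt u s' a') := by
                  refine Finset.sum_congr rfl fun s' _ => ?_
                  rw [Finset.sum_mul]
                  exact Finset.sum_congr rfl fun a _ => by ring
    -- mulVec expansion helper
    have hmulVec : ∀ (u : ℝ) (w : S → ℝ) (s : S), ((Mm u).mulVec w) s
        = w s - γ * ∑ s', (∑ a, πt u s a * P s a s') * w s' := by
      intro u w s
      simp only [hMm, Matrix.mulVec, dotProduct]
      calc ∑ x, ((1 : Matrix S S ℝ) - γ • Matrix.of fun s s' => ∑ a, πt u s a * P s a s') s x * w x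
          = ∑ x, ((if s = x then w x else 0) - γ * ((∑ a, πt u s a * P s a x) * w x)) := by
            refine Finset.sum_congr rfl fun x _ => ?_
            simp only [Matrix.sub_apply, Matrix.one_apply, Matrix.smul_apply, Matrix.of_apply,
              smul_eq_mul]
            split_ifs <;> ring
        _ = w s - γ * ∑ s', (∑ a, πt u s a * P s a s') * w s' := by
            rw [Finset.sum_sub_distrib, Finset.sum_ite_eq, if_pos (Finset.mem_univ s),
              ← Finset.mul_sum]
    -- matrix form of the Bellman equation
    have hMmul : ∀ u : ℝ, (Mm u).mulVec (fun s => ∑ a, πt u s a * Qt u s a)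
        = fun s => ∑ a, πt u s a * r s a := by
      intro u
      funext s
      rw [hmulVec u _ s, hBell u s]; ring
    -- `Mm u` has nonzero determinant
    have hdet : ∀ u : ℝ, (Mm u).det ≠ 0 := by
      intro u hdet0
      obtain ⟨v, hv0, hMv⟩ := (Matrix.exists_mulVec_eq_zero_iff).mpr hdet0
      apply hv0
      apply aux_contraction_eq_zero hγ0.le hγ1
        (fun s s' => ∑ a, πt u s a * P s a s') (hPmnn u) (hPmsum u) v
      intro s
      have h0 : ((Mm u).mulVec v) s = 0 := by rw [hMv]; rfl
      rw [hmulVec u v s] at h0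
      linarith
    -- Cramer formula for the value function
    have hVform : ∀ (u : ℝ) s, (∑ a, πt u s a * Qt u s a)
        = ((Mm u).adjugate.mulVec (fun s => ∑ a, πt u s a * r s a)) s / (Mm u).det := by
      intro u s
      have h1 : (Mm u).adjugate.mulVec ((Mm u).mulVec fun s => ∑ a, πt u s a * Qt u s a)
          = (Mm u).adjugate.mulVec (fun s => ∑ a, πt u s a * r s a) := by rw [hMmul u]
      rw [Matrix.mulVec_mulVec, Matrix.adjugate_mul, Matrix.smul_mulVec,
        Matrix.one_mulVec] at h1
      have h2 := congrFun h1 s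
      simp only [Pi.smul_apply, smul_eq_mul] at h2
      rw [eq_div_iff (hdet u), mul_comm]
      exact h2
    -- differentiability of the entries of `Mm`
    have hπdiff : ∀ s a,
        HasDerivAt (fun u => πt u s a) (ω s * (πhat t s a - πt t s a)) t :=
      fun s a => hωd s a
    have hMdiff : ∀ s s', DifferentiableAt ℝ (fun u => Mm u s s') t := by
      intro s s'
      have hrw : (fun u => Mm u s s')
          = fun u => ((1 : Matrix S S ℝ) s s') - γ * ∑ a, πt u s a * P s a s' := by
        funext u
        simp only [hMm, Matrix.sub_apply, Matrix.smul_apply, Matrix.of_apply, smul_eq_mul]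
      rw [hrw]
      exact (differentiableAt_const _).sub
        (DifferentiableAt.const_mul
          (DifferentiableAt.fun_sum fun a _ =>
            ((hπdiff s a).differentiableAt).mul_const (P s a s')) γ)
    have hadjdiff : ∀ s s', DifferentiableAt ℝ (fun u => (Mm u).adjugate s s') t := by
      intro s s'
      have hrw : (fun u => (Mm u).adjugate s s')
          = fun u => ((Mm u).updateRow s' (Pi.single s 1)).det :=
        funext fun u => Matrix.adjugate_apply _ _ _
      rw [hrw]
      apply aux_det_differentiableAt
      intro i j
      have hrw2 : (fun u => ((Mm u).updateRow s' (Pi.single s (1:ℝ))) i j)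
          = fun u => if i = s' then (Pi.single s (1:ℝ) : S → ℝ) j else Mm u i j := by
        funext u
        rw [Matrix.updateRow_apply]
      rw [hrw2]
      by_cases hij : i = s'
      · simp only [hij, if_pos rfl]
        exact differentiableAt_const _
      · simp only [if_neg hij]
        exact hMdiff i j
    have hrvdiff : ∀ s, DifferentiableAt ℝ (fun u => ∑ a, πt u s a * r s a) t :=
      fun s => DifferentiableAt.fun_sum fun a _ =>
        ((hπdiff s a).differentiableAt).mul_const (r s a)
    -- differentiability of the value function along the trajectory
    have hVdiff : ∀ s, DifferentiableAt ℝ (fun u => ∑ a, πt u s a * Qt u s a) t := by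
      intro s
      have hrw : (fun u => ∑ a, πt u s a * Qt u s a)
          = fun u => (∑ s', (Mm u).adjugate s s' * ∑ a, πt u s' a * r s' a) / (Mm u).det := by
        funext u
        rw [hVform u s]
        congr 1
      rw [hrw]
      exact DifferentiableAt.div
        (DifferentiableAt.fun_sum fun s' _ => (hadjdiff s s').mul (hrvdiff s'))
        (aux_det_differentiableAt Mm t hMdiff) (hdet t)
    have hVd' : ∀ s, ∃ D, HasDerivAt (fun u => ∑ a, πt u s a * Qt u s a) D t :=
      fun s => ⟨_, (hVdiff s).hasDerivAt⟩
    choose Vd hVd using hVd'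
    -- derivative identity obtained by differentiating the Bellman equation
    have hDid : ∀ s, Vd s
        = (∑ a, (ω s * (πhat t s a - πt t s a)) * r s a)
          + γ * ∑ s', ((∑ a, (ω s * (πhat t s a - πt t s a)) * P s a s')
              * (∑ a', πt t s' a' * Qt t s' a')
            + (∑ a, πt t s a * P s a s') * Vd s') := by
      intro s
      have hfg : (fun u => ∑ a, πt u s a * Qt u s a)
          = (fun u => (∑ a, πt u s a * r s a)
            + γ * ∑ s', (∑ a, πt u s a * P s a s') * (∑ a', πt u s' a' * Qt u s' a')) :=
        funext fun u => hBell u s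
      have hleft : HasDerivAt (fun u => (∑ a, πt u s a * r s a)
          + γ * ∑ s', (∑ a, πt u s a * P s a s') * (∑ a', πt u s' a' * Qt u s' a'))
          (Vd s) t := by
        rw [← hfg]; exact hVd s
      have hright : HasDerivAt (fun u => (∑ a, πt u s a * r s a)
          + γ * ∑ s', (∑ a, πt u s a * P s a s') * (∑ a', πt u s' a' * Qt u s' a'))
          ((∑ a, (ω s * (πhat t s a - πt t s a)) * r s a)
            + γ * ∑ s', ((∑ a, (ω s * (πhat t s a - πt t s a)) * P s a s')
                * (∑ a', πt t s' a' * Qt t s' a')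
              + (∑ a, πt t s a * P s a s') * Vd s')) t := by
        apply HasDerivAt.add
        · exact HasDerivAt.fun_sum fun a _ => (hπdiff s a).mul_const (r s a)
        · apply HasDerivAt.const_mul
          apply HasDerivAt.fun_sum
          intro s' _
          exact (HasDerivAt.fun_sum fun a _ => (hπdiff s a).mul_const (P s a s')).mul (hVd s')
      exact hleft.unique hright
    -- rewrite the inhomogeneous term as the regret-matching advantage
    have hg0 : ∀ s, (∑ a, (ω s * (πhat t s a - πt t s a)) * r s a)
        + γ * ∑ s', (∑ a, (ω s * (πhat t s a - πt t s a)) * P s a s')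
            * (∑ a', πt t s' a' * Qt t s' a')
        = ∑ a, (ω s * (πhat t s a - πt t s a)) * Qt t s a := by
      intro s
      symm
      calc ∑ a, (ω s * (πhat t s a - πt t s a)) * Qt t s a
          = ∑ a, ((ω s * (πhat t s a - πt t s a)) * r s a
            + γ * ((ω s * (πhat t s a - πt t s a))
              * ∑ s', P s a s' * (∑ a', πt t s' a' * Qt t s' a'))) := by
            refine Finset.sum_congr rfl fun a _ => ?_
            rw [hQt t s a]; ring
        _ = (∑ a, (ω s * (πhat t s a - πt t s a)) * r s a)
            + γ * ∑ a, (ω s * (πhat t s a - πt t s a))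
              * ∑ s', P s a s' * (∑ a', πt t s' a' * Qt t s' a') := by
            rw [Finset.sum_add_distrib, Finset.mul_sum]
        _ = (∑ a, (ω s * (πhat t s a - πt t s a)) * r s a)
            + γ * ∑ s', (∑ a, (ω s * (πhat t s a - πt t s a)) * P s a s')
              * (∑ a', πt t s' a' * Qt t s' a') := by
            congr 1
            congr 1
            calc ∑ a, (ω s * (πhat t s a - πt t s a))
                  * ∑ s', P s a s' * (∑ a', πt t s' a' * Qt t s' a')
                = ∑ a, ∑ s', (ω s * (πhat t s a - πt t s a))
                  * (P s a s' * (∑ a', πt t s' a' * Qt t s' a')) :=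
                  Finset.sum_congr rfl fun a _ => Finset.mul_sum _ _ _
              _ = ∑ s', ∑ a, (ω s * (πhat t s a - πt t s a))
                  * (P s a s' * (∑ a', πt t s' a' * Qt t s' a')) := Finset.sum_comm
              _ = ∑ s', (∑ a, (ω s * (πhat t s a - πt t s a)) * P s a s')
                  * (∑ a', πt t s' a' * Qt t s' a') := by
                  refine Finset.sum_congr rfl fun s' _ => ?_
                  rw [Finset.sum_mul]
                  exact Finset.sum_congr rfl fun a _ => by ring
    have hpdQ : ∀ s, ∑ a, (ω s * (πhat t s a - πt t s a)) * Qt t s a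
        = ω s * ((∑ a, πhat t s a * Qt t s a) - ∑ a, πt t s a * Qt t s a) := by
      intro s
      rw [mul_sub, Finset.mul_sum, Finset.mul_sum, ← Finset.sum_sub_distrib]
      exact Finset.sum_congr rfl fun a _ => by ring
    -- the linear fixed-point equation for `Vd`
    have hVdeq : ∀ s, Vd s
        = ω s * ((∑ a, πhat t s a * Qt t s a) - ∑ a, πt t s a * Qt t s a)
          + γ * ∑ s', (∑ a, πt t s a * P s a s') * Vd s' := by
      intro s
      have h1 := hDid s
      rw [Finset.sum_add_distrib, mul_add] at h1
      have h2 := hg0 s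
      have h3 := hpdQ s
      linarith
    -- nonnegativity of the advantage term
    have hg0nn : ∀ s, 0 ≤ ω s
        * ((∑ a, πhat t s a * Qt t s a) - ∑ a, πt t s a * Qt t s a) := by
      intro s
      apply mul_nonneg (le_trans hη0.le (hωmem s).1)
      rw [sub_nonneg]
      exact aux_rm_step (Qt t s) (πt t s) (πhat t s) (hπhat t s) (hπhat0 t s)
    -- hence `Vd ≥ 0`
    have hVdnn : ∀ s, 0 ≤ Vd s :=
      aux_comparison_nonneg hγ0.le hγ1 (fun s s' => ∑ a, πt t s a * P s a s')
        (hPmnn t) (hPmsum t)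
        (fun s => ω s * ((∑ a, πhat t s a * Qt t s a) - ∑ a, πt t s a * Qt t s a))
        Vd hg0nn hVdeq
    -- conclude
    have hL : HasDerivAt
        (fun u => ∑ s, (∑ a, πstar s a * Qstar s a - ∑ a, πt u s a * Qt u s a))
        (∑ s, -Vd s) t :=
      HasDerivAt.fun_sum fun s _ => (hVd s).const_sub (∑ a, πstar s a * Qstar s a)
    have hdval : d = ∑ s, -Vd s := hd.unique hL
    rw [hdval]
    exact Finset.sum_nonpos fun s _ => neg_nonpos.mpr (hVdnn s)
end

section
/- For a finite discounted MDP with rewards bounded by R_max, all Q-functions Q^π satisfy ‖Q^π‖_∞ ≤ R_max/(1-γ), and for any two policies π₁, π₂, ‖Q^{π₁} - Q^{π₂}‖_∞ ≤ (γ R_max/(1-γ)²) · max_s ‖π₁(s) - π₂(s)‖₁; in particular the map π ↦ Q^π is Lipschitz continuous on the product of simplices. -/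
open Finset

/-- Boundedness and Lipschitz continuity of `π ↦ Q^π`: all action-value functions are
bounded by `R_max/(1-γ)` in sup norm, and
`‖Q^{π₁} - Q^{π₂}‖_∞ ≤ (γ R_max/(1-γ)²) max_s ‖π₁(s) - π₂(s)‖₁`. -/
theorem stmt_17 {S A : Type*} [Fintype S] [Fintype A] [Nonempty S] [Nonempty A]
    (P : S → A → S → ℝ) (r : S → A → ℝ) (γ : ℝ)
    (hγ0 : 0 < γ) (hγ1 : γ < 1)
    (hPnn : ∀ s a s', 0 ≤ P s a s') (hPsum : ∀ s a, ∑ s', P s a s' = 1)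
    (Rmax : ℝ) (hr : ∀ s a, |r s a| ≤ Rmax)
    (π₁ π₂ : S → A → ℝ)
    (hπ₁nn : ∀ s a, 0 ≤ π₁ s a) (hπ₁sum : ∀ s, ∑ a, π₁ s a = 1)
    (hπ₂nn : ∀ s a, 0 ≤ π₂ s a) (hπ₂sum : ∀ s, ∑ a, π₂ s a = 1)
    (Q₁ Q₂ : S → A → ℝ)
    (hQ₁ : ∀ s a, Q₁ s a = r s a + γ * ∑ s', P s a s' * ∑ a', π₁ s' a' * Q₁ s' a')
    (hQ₂ : ∀ s a, Q₂ s a = r s a + γ * ∑ s', P s a s' * ∑ a', π₂ s' a' * Q₂ s' a') :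
    (∀ s a, |Q₁ s a| ≤ Rmax / (1 - γ)) ∧
    (⨆ p : S × A, |Q₁ p.1 p.2 - Q₂ p.1 p.2|) ≤
      (γ * Rmax / (1 - γ) ^ 2) * ⨆ s, ∑ a, |π₁ s a - π₂ s a| := by
  have h1γ : (0:ℝ) < 1 - γ := by linarith
  obtain ⟨s₀⟩ := ‹Nonempty S›
  obtain ⟨a₀⟩ := ‹Nonempty A›
  have hR : 0 ≤ Rmax := le_trans (abs_nonneg _) (hr s₀ a₀)
  set MQ := ⨆ p : S × A, |Q₁ p.1 p.2| with hMQdef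
  have hbdd : BddAbove (Set.range fun p : S × A => |Q₁ p.1 p.2|) :=
    Finite.bddAbove_range _
  have hle : ∀ s a, |Q₁ s a| ≤ MQ := fun s a => le_ciSup hbdd (s, a)
  have hMQ0 : 0 ≤ MQ := le_trans (abs_nonneg _) (hle s₀ a₀)
  have key : ∀ s a, |Q₁ s a| ≤ Rmax + γ * MQ := by
    intro s a
    rw [hQ₁ s a]
    have hinner : ∀ s', |∑ a', π₁ s' a' * Q₁ s' a'| ≤ MQ := by
      intro s'
      calc |∑ a', π₁ s' a' * Q₁ s' a'| ≤ ∑ a', |π₁ s' a' * Q₁ s' a'| :=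
            Finset.abs_sum_le_sum_abs _ _
        _ ≤ ∑ a', π₁ s' a' * MQ := by
            apply Finset.sum_le_sum; intro a' _
            rw [abs_mul, abs_of_nonneg (hπ₁nn s' a')]
            exact mul_le_mul_of_nonneg_left (hle s' a') (hπ₁nn s' a')
        _ = MQ := by rw [← Finset.sum_mul, hπ₁sum s', one_mul]
    have houter : |∑ s', P s a s' * ∑ a', π₁ s' a' * Q₁ s' a'| ≤ MQ := by
      calc |∑ s', P s a s' * ∑ a', π₁ s' a' * Q₁ s' a'|
          ≤ ∑ s', |P s a s' * ∑ a', π₁ s' a' * Q₁ s' a'| :=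
            Finset.abs_sum_le_sum_abs _ _
        _ ≤ ∑ s', P s a s' * MQ := by
            apply Finset.sum_le_sum; intro s' _
            rw [abs_mul, abs_of_nonneg (hPnn s a s')]
            exact mul_le_mul_of_nonneg_left (hinner s') (hPnn s a s')
        _ = MQ := by rw [← Finset.sum_mul, hPsum s a, one_mul]
    calc |r s a + γ * ∑ s', P s a s' * ∑ a', π₁ s' a' * Q₁ s' a'|
        ≤ |r s a| + |γ * ∑ s', P s a s' * ∑ a', π₁ s' a' * Q₁ s' a'| := abs_add_le _ _
      _ ≤ Rmax + γ * MQ := by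
          apply add_le_add (hr s a)
          rw [abs_mul, abs_of_pos hγ0]
          exact mul_le_mul_of_nonneg_left houter hγ0.le
  have hMQb : MQ ≤ Rmax + γ * MQ :=
    ciSup_le fun p => key p.1 p.2
  have hMQR : MQ * (1 - γ) ≤ Rmax := by nlinarith
  have part1 : ∀ s a, |Q₁ s a| ≤ Rmax / (1 - γ) := by
    intro s a
    rw [le_div_iff₀ h1γ]
    exact le_trans (mul_le_mul_of_nonneg_right (hle s a) h1γ.le) hMQR
  refine ⟨part1, ?_⟩
  set L := ⨆ s, ∑ a, |π₁ s a - π₂ s a| with hLdef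
  have hLbdd : BddAbove (Set.range fun s => ∑ a, |π₁ s a - π₂ s a|) :=
    Finite.bddAbove_range _
  have hLge : ∀ s, ∑ a, |π₁ s a - π₂ s a| ≤ L := fun s => le_ciSup hLbdd s
  have hL0 : 0 ≤ L :=
    le_trans (Finset.sum_nonneg fun a _ => abs_nonneg _) (hLge s₀)
  set D := ⨆ p : S × A, |Q₁ p.1 p.2 - Q₂ p.1 p.2| with hDdef
  have hDbdd : BddAbove (Set.range fun p : S × A => |Q₁ p.1 p.2 - Q₂ p.1 p.2|) :=
    Finite.bddAbove_range _
  have hDle : ∀ s a, |Q₁ s a - Q₂ s a| ≤ D := fun s a => le_ciSup hDbdd (s, a)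
  have hD0 : 0 ≤ D := le_trans (abs_nonneg _) (hDle s₀ a₀)
  have key2 : ∀ s a, |Q₁ s a - Q₂ s a| ≤ γ * (MQ * L + D) := by
    intro s a
    rw [hQ₁ s a, hQ₂ s a]
    have hinner : ∀ s',
        |(∑ a', π₁ s' a' * Q₁ s' a') - ∑ a', π₂ s' a' * Q₂ s' a'| ≤ MQ * L + D := by
      intro s'
      have hsplit : (∑ a', π₁ s' a' * Q₁ s' a') - ∑ a', π₂ s' a' * Q₂ s' a'
          = (∑ a', (π₁ s' a' - π₂ s' a') * Q₁ s' a')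
            + ∑ a', π₂ s' a' * (Q₁ s' a' - Q₂ s' a') := by
        rw [← Finset.sum_add_distrib, ← Finset.sum_sub_distrib]
        apply Finset.sum_congr rfl; intro a' _; ring
      rw [hsplit]
      refine le_trans (abs_add_le _ _) (add_le_add ?_ ?_)
      · calc |∑ a', (π₁ s' a' - π₂ s' a') * Q₁ s' a'|
            ≤ ∑ a', |(π₁ s' a' - π₂ s' a') * Q₁ s' a'| := Finset.abs_sum_le_sum_abs _ _
          _ ≤ ∑ a', |π₁ s' a' - π₂ s' a'| * MQ := by
              apply Finset.sum_le_sum; intro a' _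
              rw [abs_mul]
              exact mul_le_mul_of_nonneg_left (hle s' a') (abs_nonneg _)
          _ = (∑ a', |π₁ s' a' - π₂ s' a'|) * MQ := by rw [Finset.sum_mul]
          _ ≤ L * MQ := mul_le_mul_of_nonneg_right (hLge s') hMQ0
          _ = MQ * L := mul_comm _ _
      · calc |∑ a', π₂ s' a' * (Q₁ s' a' - Q₂ s' a')|
            ≤ ∑ a', |π₂ s' a' * (Q₁ s' a' - Q₂ s' a')| := Finset.abs_sum_le_sum_abs _ _
          _ ≤ ∑ a', π₂ s' a' * D := by
              apply Finset.sum_le_sum; intro a' _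
              rw [abs_mul, abs_of_nonneg (hπ₂nn s' a')]
              exact mul_le_mul_of_nonneg_left (hDle s' a') (hπ₂nn s' a')
          _ = D := by rw [← Finset.sum_mul, hπ₂sum s', one_mul]
    have hsplit2 : r s a + γ * (∑ s', P s a s' * ∑ a', π₁ s' a' * Q₁ s' a')
        - (r s a + γ * ∑ s', P s a s' * ∑ a', π₂ s' a' * Q₂ s' a')
        = γ * ∑ s', P s a s' *
            ((∑ a', π₁ s' a' * Q₁ s' a') - ∑ a', π₂ s' a' * Q₂ s' a') := by
      rw [add_sub_add_left_eq_sub, ← mul_sub, ← Finset.sum_sub_distrib]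
      congr 1
      apply Finset.sum_congr rfl; intro s' _; ring
    rw [hsplit2, abs_mul, abs_of_pos hγ0]
    apply mul_le_mul_of_nonneg_left _ hγ0.le
    calc |∑ s', P s a s' * ((∑ a', π₁ s' a' * Q₁ s' a') - ∑ a', π₂ s' a' * Q₂ s' a')|
        ≤ ∑ s', |P s a s' * ((∑ a', π₁ s' a' * Q₁ s' a') - ∑ a', π₂ s' a' * Q₂ s' a')| :=
          Finset.abs_sum_le_sum_abs _ _
      _ ≤ ∑ s', P s a s' * (MQ * L + D) := by
          apply Finset.sum_le_sum; intro s' _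
          rw [abs_mul, abs_of_nonneg (hPnn s a s')]
          exact mul_le_mul_of_nonneg_left (hinner s') (hPnn s a s')
      _ = MQ * L + D := by rw [← Finset.sum_mul, hPsum s a, one_mul]
  have hDb : D ≤ γ * (MQ * L + D) := ciSup_le fun p => key2 p.1 p.2
  rw [div_mul_eq_mul_div, le_div_iff₀ (by positivity)]
  nlinarith [mul_le_mul_of_nonneg_left hDb h1γ.le, mul_le_mul_of_nonneg_left hMQR (mul_nonneg hγ0.le hL0)]
end
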